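/- Crossing symmetry of the functions σ̃_k: suppose σ₁, …, σ_N : ℂ → ℂ satisfy σ_{N+1−k}(−λ−ħρ) = σ_k(λ) for all λ and all 1 ≤ k ≤ N. Define σ̃_k(λ) = ∏_{j=1}^{k−1} σ_j(−λ − ħ(N/2 + ρ − j)) · ∏_{j=k+1}^{N} σ_j(−λ − ħ(N/2 + ρ − j + 1)). Then σ̃_{N+1−k}(−λ−ħρ) = σ̃_k(λ) for all λ ∈ ℂ and all 1 ≤ k ≤ N. -/

import Mathlib

open Finset

noncomputable section

/-- The functions `σ̃_k(λ) = ∏_{j=1}^{k−1} σ_j(−λ − ħ(N/2 + ρ − j)) ·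
∏_{j=k+1}^{N} σ_j(−λ − ħ(N/2 + ρ − j + 1))`. -/
def sigmaTilde (N : ℕ) (hbar ρ : ℂ) (σ : ℕ → ℂ → ℂ) (k : ℕ) (lam : ℂ) : ℂ :=
  (∏ j ∈ Icc 1 (k - 1), σ j (-lam - hbar * ((N : ℂ) / 2 + ρ - (j : ℂ)))) *
  (∏ j ∈ Icc (k + 1) N, σ j (-lam - hbar * ((N : ℂ) / 2 + ρ - (j : ℂ) + 1)))

/-- crossing symmetry of `σ̃`: if `σ_{k̄}(−λ−ħρ) = σ_k(λ)`
(with `k̄ = N+1−k`), then `σ̃_{k̄}(−λ−ħρ) = σ̃_k(λ)`. -/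
theorem sigmaTilde_crossing (N : ℕ) (hN : 2 ≤ N) (hbar : ℂ) (hhbar : hbar ≠ 0)
    (ρ : ℂ) (σ : ℕ → ℂ → ℂ)
    (hcross : ∀ k ∈ Icc 1 N, ∀ lam : ℂ, σ (N + 1 - k) (-lam - hbar * ρ) = σ k lam) :
    ∀ k ∈ Icc 1 N, ∀ lam : ℂ,
      sigmaTilde N hbar ρ σ (N + 1 - k) (-lam - hbar * ρ) =
        sigmaTilde N hbar ρ σ k lam := by
  intro k hk lam
  simp only [mem_Icc] at hk
  obtain ⟨hk1, hkN⟩ := hk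
  unfold sigmaTilde
  rw [mul_comm]
  congr 1
  · refine Finset.prod_nbij' (fun j => N + 1 - j) (fun j => N + 1 - j) ?_ ?_ ?_ ?_ ?_
    · intro a ha; simp only [mem_Icc] at ha ⊢; omega
    · intro a ha; simp only [mem_Icc] at ha ⊢; omega
    · intro a ha; simp only [mem_Icc] at ha; omega
    · intro a ha; simp only [mem_Icc] at ha; omega
    · intro a ha
      simp only [mem_Icc] at ha
      have h2 : a ≤ N := ha.2
      have := hcross (N + 1 - a) (by simp only [mem_Icc]; omega)
        (-lam - hbar * ((N : ℂ) / 2 + ρ - ((N + 1 - a : ℕ) : ℂ)))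
      have hNa : N + 1 - (N + 1 - a) = a := by omega
      rw [hNa] at this
      rw [← this]
      congr 1
      have hc : ((N + 1 - a : ℕ) : ℂ) = (N : ℂ) + 1 - (a : ℂ) := by
        push_cast [Nat.cast_sub (by omega : a ≤ N + 1)]; ring
      rw [hc]; ring
  · refine Finset.prod_nbij' (fun j => N + 1 - j) (fun j => N + 1 - j) ?_ ?_ ?_ ?_ ?_
    · intro a ha; simp only [mem_Icc] at ha ⊢; omega
    · intro a ha; simp only [mem_Icc] at ha ⊢; omega
    · intro a ha; simp only [mem_Icc] at ha; omega
    · intro a ha; simp only [mem_Icc] at ha; omega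
    · intro a ha
      simp only [mem_Icc] at ha
      have h2 : a ≤ N := by omega
      have := hcross (N + 1 - a) (by simp only [mem_Icc]; omega)
        (-lam - hbar * ((N : ℂ) / 2 + ρ - ((N + 1 - a : ℕ) : ℂ) + 1))
      have hNa : N + 1 - (N + 1 - a) = a := by omega
      rw [hNa] at this
      rw [← this]
      congr 1
      have hc : ((N + 1 - a : ℕ) : ℂ) = (N : ℂ) + 1 - (a : ℂ) := by
        push_cast [Nat.cast_sub (by omega : a ≤ N + 1)]; ring
      rw [hc]; ring
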